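/- Singularity at the origin: for every k̃ ∈ ℝ, lim_{ρ→0⁺} (ρ/r_s)^{2(2ζ − k̃ + 1)} · K(ρ) = (2/(ζ⁸ r_s⁴)) · [ ζ(−4k̃³ + 5k̃² + 3) + (9k̃⁴ − 2k̃³ + 10k̃² + 3) ]; since 2ζ − k̃ + 1 > 0 for all k̃ ∈ ℝ, the Kretschmann function K diverges to +∞ as ρ → 0⁺ whenever this constant is positive. -/

import Mathlib

open Real Filter Topology

/-- Singularity at the origin: `lim_{ρ→0⁺} (ρ/r_s)^{2(2ζ − k̃ + 1)}·K(ρ)` equals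
`(2/(ζ⁸ r_s⁴))·[ζ(−4k̃³ + 5k̃² + 3) + (9k̃⁴ − 2k̃³ + 10k̃² + 3)]`; since `2ζ − k̃ + 1 > 0`,
`K` diverges to `+∞` as `ρ → 0⁺` whenever this constant is positive. -/
theorem kretschmann_origin_singularity
    (rs kt : ℝ) (hrs : 0 < rs)
    (ζ : ℝ) (hζ : ζ = Real.sqrt (1 + 3 * kt ^ 2))
    (K : ℝ → ℝ)
    (hK : ∀ ρ : ℝ, 0 < ρ → ρ ≠ rs → K ρ =
      (2 / (ζ ^ 8 * rs ^ 4)) *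
        (1 - Real.sign (1 - rs / ρ) * |1 - rs / ρ| ^ ζ) ^ 6 *
        |1 - rs / ρ| ^ (2 - 4 * ζ - 2 * kt) *
        (4 * kt ^ 2 * (kt + 1) * Real.sign (1 - rs / ρ) * |1 - rs / ρ| ^ ζ +
          ζ * (4 * kt ^ 3 - 5 * kt ^ 2 - 3) * (1 - |1 - rs / ρ| ^ (2 * ζ)) +
          (9 * kt ^ 4 - 2 * kt ^ 3 + 10 * kt ^ 2 + 3) * (1 + |1 - rs / ρ| ^ (2 * ζ)))) :
    Tendsto (fun ρ : ℝ => (ρ / rs) ^ (2 * (2 * ζ - kt + 1)) * K ρ) (𝓝[>] 0)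
        (𝓝 ((2 / (ζ ^ 8 * rs ^ 4)) *
          (ζ * (-4 * kt ^ 3 + 5 * kt ^ 2 + 3) +
            (9 * kt ^ 4 - 2 * kt ^ 3 + 10 * kt ^ 2 + 3)))) ∧
      0 < 2 * ζ - kt + 1 ∧
      (0 < (2 / (ζ ^ 8 * rs ^ 4)) *
          (ζ * (-4 * kt ^ 3 + 5 * kt ^ 2 + 3) +
            (9 * kt ^ 4 - 2 * kt ^ 3 + 10 * kt ^ 2 + 3)) →
        Tendsto K (𝓝[>] 0) atTop) := by
  have h1 : (1:ℝ) ≤ 1 + 3 * kt ^ 2 := by nlinarith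
  have hζ1 : (1:ℝ) ≤ ζ := by
    rw [hζ]
    calc (1:ℝ) = Real.sqrt 1 := Real.sqrt_one.symm
    _ ≤ _ := Real.sqrt_le_sqrt h1
  have hζ0 : 0 < ζ := lt_of_lt_of_le one_pos hζ1
  have habsk : |kt| ≤ ζ := by
    rw [hζ, ← Real.sqrt_sq_eq_abs]
    exact Real.sqrt_le_sqrt (by nlinarith)
  have hEpos : 0 < 2 * ζ - kt + 1 := by
    rcases abs_cases kt with ⟨h, _⟩ | ⟨h, _⟩ <;> nlinarith
  have he : 0 < 2 * (2 * ζ - kt + 1) := by linarith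
  set C := 2 / (ζ ^ 8 * rs ^ 4) with hC
  set A := 9 * kt ^ 4 - 2 * kt ^ 3 + 10 * kt ^ 2 + 3 with hA
  set D := 4 * kt ^ 3 - 5 * kt ^ 2 - 3 with hD
  set c := 4 * kt ^ 2 * (kt + 1) with hcc
  set e := 2 * (2 * ζ - kt + 1) with heE
  set g : ℝ → ℝ := fun ρ =>
    C * ((rs - ρ) / rs) ^ e * ((ρ / (rs - ρ)) ^ ζ + 1) ^ 6 *
      (-c * (ρ / (rs - ρ)) ^ ζ + ζ * D * (((ρ / (rs - ρ)) ^ ζ) ^ 2 - 1) +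
        A * (((ρ / (rs - ρ)) ^ ζ) ^ 2 + 1)) with hg
  have hdiv : Tendsto (fun ρ : ℝ => ρ / (rs - ρ)) (𝓝 0) (𝓝 0) := by
    have hcont : ContinuousAt (fun ρ : ℝ => ρ / (rs - ρ)) 0 :=
      (continuousAt_id).div (continuousAt_const.sub continuousAt_id) (by simpa using hrs.ne')
    simpa using hcont.tendsto
  have hw : Tendsto (fun ρ : ℝ => (ρ / (rs - ρ)) ^ ζ) (𝓝 0) (𝓝 0) := by
    have hc : ContinuousAt (fun x : ℝ => x ^ ζ) 0 :=
      Real.continuousAt_rpow_const 0 ζ (Or.inr hζ0.le)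
    have := hc.tendsto.comp hdiv
    simpa [Real.zero_rpow hζ0.ne', Function.comp_def] using this
  have hbase : Tendsto (fun ρ : ℝ => ((rs - ρ) / rs) ^ e) (𝓝 0) (𝓝 1) := by
    have hb : Tendsto (fun ρ : ℝ => (rs - ρ) / rs) (𝓝 0) (𝓝 1) := by
      have hcont : ContinuousAt (fun ρ : ℝ => (rs - ρ) / rs) 0 :=
        (continuousAt_const.sub continuousAt_id).div continuousAt_const hrs.ne'
      simpa [div_self hrs.ne'] using hcont.tendsto
    have hc : ContinuousAt (fun x : ℝ => x ^ e) 1 :=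
      Real.continuousAt_rpow_const 1 e (Or.inl one_ne_zero)
    have := hc.tendsto.comp hb
    simpa [Real.one_rpow, Function.comp_def] using this
  have hgT : Tendsto g (𝓝 0) (𝓝 (C * (ζ * (-4 * kt ^ 3 + 5 * kt ^ 2 + 3) + A))) := by
    have hP : Tendsto (fun ρ : ℝ =>
        (-c * (ρ / (rs - ρ)) ^ ζ + ζ * D * (((ρ / (rs - ρ)) ^ ζ) ^ 2 - 1) +
          A * (((ρ / (rs - ρ)) ^ ζ) ^ 2 + 1)))
        (𝓝 0) (𝓝 (ζ * (-4 * kt ^ 3 + 5 * kt ^ 2 + 3) + A)) := by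
      have hPc : Continuous (fun w : ℝ => -c * w + ζ * D * (w ^ 2 - 1) + A * (w ^ 2 + 1)) := by
        continuity
      have h := (hPc.tendsto 0).comp hw
      have hval : -c * 0 + ζ * D * ((0:ℝ) ^ 2 - 1) + A * ((0:ℝ) ^ 2 + 1)
          = ζ * (-4 * kt ^ 3 + 5 * kt ^ 2 + 3) + A := by
        rw [hD]; ring
      rw [← hval]
      exact h
    have h2 := (((tendsto_const_nhds (x := C)).mul hbase).mul
        ((hw.add (tendsto_const_nhds (x := (1:ℝ)))).pow 6)).mul hP
    have hval2 : C * 1 * ((0:ℝ) + 1) ^ 6 * (ζ * (-4 * kt ^ 3 + 5 * kt ^ 2 + 3) + A)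
        = C * (ζ * (-4 * kt ^ 3 + 5 * kt ^ 2 + 3) + A) := by norm_num
    rw [← hval2]
    exact h2
  have hmem : Set.Ioo (0:ℝ) rs ∈ 𝓝[>] (0:ℝ) :=
    Ioo_mem_nhdsGT_of_mem ⟨le_refl 0, hrs⟩
  have heq : ∀ ρ ∈ Set.Ioo (0:ℝ) rs, (ρ / rs) ^ e * K ρ = g ρ := by
    rintro ρ ⟨hρ0, hρrs⟩
    have hne : ρ ≠ rs := ne_of_lt hρrs
    rw [hK ρ hρ0 hne]
    have hxneg : 1 - rs / ρ < 0 := by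
      have : 1 < rs / ρ := (one_lt_div hρ0).mpr hρrs
      linarith
    rw [Real.sign_of_neg hxneg, abs_of_neg hxneg]
    have habs2 : -(1 - rs / ρ) = (rs - ρ) / ρ := by field_simp; ring
    rw [habs2]
    set u := (rs - ρ) / ρ with hudef
    have hu : 0 < u := div_pos (by linarith) hρ0
    have hv : ρ / (rs - ρ) = u⁻¹ := by rw [hudef, inv_div]
    have h2 : u ^ (2 * ζ) = (u ^ ζ) ^ 2 := by
      rw [← Real.rpow_natCast (u ^ ζ) 2, ← Real.rpow_mul hu.le]
      norm_num [mul_comm]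
    have h8 : u ^ e = u ^ (2 - 4 * ζ - 2 * kt) * (u ^ ζ) ^ 8 := by
      rw [← Real.rpow_natCast (u ^ ζ) 8, ← Real.rpow_mul hu.le, ← Real.rpow_add hu, heE]
      norm_num; ring_nf
    have hsplit : (rs - ρ) / rs = ρ / rs * u := by
      rw [hudef]; field_simp
    have ha : 0 < u ^ ζ := Real.rpow_pos_of_pos hu ζ
    have hQ : 0 < u ^ (2 - 4 * ζ - 2 * kt) := Real.rpow_pos_of_pos hu _
    have hT : 0 < (ρ / rs) ^ e := Real.rpow_pos_of_pos (div_pos hρ0 hrs) e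
    simp only [hg, hv, Real.inv_rpow hu.le, hsplit,
      Real.mul_rpow (div_pos hρ0 hrs).le hu.le, h8, h2]
    field_simp
    ring
  have hmain : Tendsto (fun ρ : ℝ => (ρ / rs) ^ e * K ρ) (𝓝[>] 0)
      (𝓝 (C * (ζ * (-4 * kt ^ 3 + 5 * kt ^ 2 + 3) + A))) := by
    apply Tendsto.congr' _ (hgT.mono_left nhdsWithin_le_nhds)
    filter_upwards [hmem] with ρ hρ
    exact (heq ρ hρ).symm
  refine ⟨hmain, hEpos, ?_⟩
  intro hL
  have hTz : Tendsto (fun ρ : ℝ => (ρ / rs) ^ e) (𝓝[>] 0) (𝓝[>] 0) := by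
    rw [tendsto_nhdsWithin_iff]
    constructor
    · have hb : Tendsto (fun ρ : ℝ => ρ / rs) (𝓝[>] 0) (𝓝 0) := by
        have hh := (continuous_id.div_const rs).tendsto (0:ℝ)
        simpa using hh.mono_left nhdsWithin_le_nhds
      have := hb.rpow_const (Or.inr he.le)
      simpa [Real.zero_rpow he.ne'] using this
    · filter_upwards [self_mem_nhdsWithin] with ρ hρ
      exact Real.rpow_pos_of_pos (div_pos hρ hrs) e
  have hinv : Tendsto (fun ρ : ℝ => ((ρ / rs) ^ e)⁻¹) (𝓝[>] 0) atTop :=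
    hTz.inv_tendsto_nhdsGT_zero
  have hKt := Tendsto.pos_mul_atTop hL hmain hinv
  apply hKt.congr'
  filter_upwards [hmem] with ρ hρ
  have hT : ((ρ / rs) ^ e : ℝ) ≠ 0 := (Real.rpow_pos_of_pos (div_pos hρ.1 hrs) e).ne'
  field_simp
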